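/- Let λ ∈ (0,1), r ∈ (0,1], n ≥ 2, and let F_{λ,r} be the rescaled Pareto distribution with cdf F_{λ,r}(x) = 1 − (1 + (x−1)/r)^{−1/λ} on [1,∞), with monopoly reserve r*. Then the optimal (Myerson) revenue for n i.i.d. bidders satisfies Myer(F_{λ,r},n) ≥ 1 + r·(β_{n,λ} − 1), and consequently Myer(F_{λ,r},n)/Price(F_{λ,r},n) ≥ (1 + r·(β_{n,λ} − 1)) / (sup_{q∈[0,1]} H_{n,λ}(r,q)). -/

import Mathlib

open Real Set MeasureTheory

/-- `β_{n,λ} = n!·Γ(2−λ)/Γ(n+1−λ)`. -/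
noncomputable def betaCoef (n : ℕ) (lam : ℝ) : ℝ :=
  (n.factorial : ℝ) * Real.Gamma (2 - lam) / Real.Gamma ((n : ℝ) + 1 - lam)

/-- Cdf of the rescaled Pareto distribution `F_{λ,r}(x) = 1 − (1 + (x−1)/r)^{−1/λ}`,
supported on `[1,∞)`. -/
noncomputable def Fpar (lam r x : ℝ) : ℝ := 1 - (1 + (x - 1) / r) ^ (-(1 : ℝ) / lam)

/-- Density of the rescaled Pareto distribution:
`f_{λ,r}(x) = (1/(λr))·(1 + (x−1)/r)^{−1/λ−1}`. -/
noncomputable def fpar (lam r x : ℝ) : ℝ :=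
  (1 / (lam * r)) * (1 + (x - 1) / r) ^ (-(1 : ℝ) / lam - 1)

/-- `H_{n,λ}(r,q) = (1 + r·(q^{−λ} − 1))·(1 − (1−q)^n)`. -/
noncomputable def Hnl (n : ℕ) (lam r q : ℝ) : ℝ :=
  (1 + r * (q ^ (-lam) - 1)) * (1 - (1 - q) ^ n)

/-- Optimal (Myerson) revenue for `n` bidders:
`Myer(F,n) = ∫_{r*}^∞ (x − (1−F(x))/f(x))·n·F(x)^{n−1}·f(x) dx`. -/
noncomputable def Myer (F f : ℝ → ℝ) (rstar : ℝ) (n : ℕ) : ℝ :=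
  ∫ x in Set.Ioi rstar, (x - (1 - F x) / f x) * (n : ℝ) * F x ^ (n - 1) * f x

lemma beta_int {lam : ℝ} (hl0 : 0 < lam) (hl1 : lam < 1) (n : ℕ) (hn : 1 ≤ n) :
    ∫ u in (0:ℝ)..1, u ^ (-lam) * (1-u)^(n-1) =
      Real.Gamma (1-lam) * ((n-1).factorial : ℝ) / Real.Gamma ((n:ℝ)+1-lam) := by
  have h1 : (0:ℝ) < 1 - lam := by linarith
  have hGpos : 0 < Real.Gamma ((n:ℝ)+1-lam) := by
    apply Real.Gamma_pos_of_pos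
    have : (1:ℝ) ≤ (n:ℝ) := by exact_mod_cast hn
    linarith
  have hbeta := Complex.Gamma_mul_Gamma_eq_betaIntegral
      (s := ((1-lam : ℝ) : ℂ)) (t := ((n:ℝ) : ℂ)) (by simpa using h1)
      (by simp; positivity)
  have hIval : Complex.betaIntegral ((1-lam : ℝ) : ℂ) ((n:ℝ) : ℂ)
      = ((∫ u in (0:ℝ)..1, u ^ (-lam) * (1-u)^(n-1) : ℝ) : ℂ) := by
    rw [Complex.betaIntegral, ← intervalIntegral.integral_ofReal]
    apply intervalIntegral.integral_congr
    intro x hx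
    rw [Set.uIcc_of_le (zero_le_one)] at hx
    have hx0 : (0:ℝ) ≤ x := hx.1
    have e1 : ((x ^ (-lam) : ℝ) : ℂ) = (x:ℂ) ^ (((1-lam:ℝ):ℂ) - 1) := by
      rw [Complex.ofReal_cpow hx0]
      congr 1
      push_cast; ring
    have e2 : (((1-x)^(n-1) : ℝ) : ℂ) = (1 - (x:ℂ)) ^ (((n:ℝ):ℂ) - 1) := by
      have : (((n:ℝ):ℂ) - 1) = ((n-1 : ℕ) : ℂ) := by
        push_cast [Nat.cast_sub hn]; ring
      rw [this, Complex.cpow_natCast]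
      push_cast; ring
    simp only [Complex.ofReal_mul]
    rw [e1, e2]
  rw [hIval] at hbeta
  have hG1 : Complex.Gamma ((1-lam : ℝ) : ℂ) = ((Real.Gamma (1-lam) : ℝ) : ℂ) :=
    Complex.Gamma_ofReal _
  have hG2 : Complex.Gamma ((n:ℝ) : ℂ) = (((n-1).factorial : ℝ) : ℂ) := by
    have : ((n:ℝ):ℂ) = ((n-1 : ℕ) : ℂ) + 1 := by push_cast [Nat.cast_sub hn]; ring
    rw [this, Complex.Gamma_nat_eq_factorial]
    norm_num
  have hG3 : Complex.Gamma (((1-lam:ℝ):ℂ) + ((n:ℝ):ℂ)) = ((Real.Gamma ((n:ℝ)+1-lam) : ℝ) : ℂ) := by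
    have : (((1-lam:ℝ):ℂ) + ((n:ℝ):ℂ)) = (((n:ℝ)+1-lam : ℝ) : ℂ) := by push_cast; ring
    rw [this, Complex.Gamma_ofReal]
  rw [hG1, hG2, hG3, ← Complex.ofReal_mul, ← Complex.ofReal_mul] at hbeta
  have := Complex.ofReal_injective hbeta
  field_simp
  linarith [this]

lemma base_comp {r q lam : ℝ} (hr0 : 0 < r) :
    1 + ((1 + r*(q^(-lam)-1)) - 1)/r = q^(-lam) := by field_simp; ring

lemma Fpar_comp {lam r q : ℝ} (hl0 : 0 < lam) (hr0 : 0 < r) (hq : 0 < q) :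
    Fpar lam r (1 + r*(q^(-lam)-1)) = 1 - q := by
  rw [Fpar, show 1 + (1 + r*(q^(-lam)-1) - 1)/r = q^(-lam) from base_comp hr0,
    ← Real.rpow_mul hq.le]
  rw [show -lam * (-(1:ℝ)/lam) = 1 by field_simp, Real.rpow_one]

lemma fpar_comp {lam r q : ℝ} (hl0 : 0 < lam) (hr0 : 0 < r) (hq : 0 < q) :
    fpar lam r (1 + r*(q^(-lam)-1)) = (1/(lam*r)) * q^(1+lam) := by
  rw [fpar, show 1 + (1 + r*(q^(-lam)-1) - 1)/r = q^(-lam) from base_comp hr0,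
    ← Real.rpow_mul hq.le]
  congr 2
  field_simp; ring

lemma inv_comp {lam b : ℝ} (hl0 : 0 < lam) (hb : 0 < b) :
    (b ^ (-(1:ℝ)/lam)) ^ (-lam) = b := by
  rw [← Real.rpow_mul hb.le]
  rw [show -(1:ℝ)/lam * (-lam) = 1 by field_simp, Real.rpow_one]

lemma img_eq {lam r : ℝ} (hl0 : 0 < lam) (hl1 : lam < 1) (hr0 : 0 < r) :
    (fun u => 1 + r*(u^(-lam)-1)) '' Set.Ioo 0 1 = Set.Ioi 1 := by
  ext x
  constructor
  · rintro ⟨u, ⟨hu0, hu1⟩, rfl⟩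
    have : 1 < u ^ (-lam) := by
      rw [Real.one_lt_rpow_iff hu0.le]
      right; exact ⟨hu0, hu1, by linarith⟩
    simp only [Set.mem_Ioi]
    nlinarith
  · intro hx
    simp only [Set.mem_Ioi] at hx
    have hb : 1 < 1 + (x-1)/r := by
      have : 0 < (x-1)/r := div_pos (by linarith) hr0
      linarith
    refine ⟨(1 + (x-1)/r) ^ (-(1:ℝ)/lam), ⟨Real.rpow_pos_of_pos (by linarith) _,
      Real.rpow_lt_one_of_one_lt_of_neg hb (by
        rw [neg_div]; simp only [Left.neg_neg_iff]; positivity)⟩, ?_⟩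
    simp only
    rw [inv_comp hl0 (by linarith : (0:ℝ) < 1 + (x-1)/r)]
    field_simp; ring

lemma integrand_comp {lam r : ℝ} (hl0 : 0 < lam) (hr0 : 0 < r) (n : ℕ)
    {u : ℝ} (hu0 : 0 < u) :
    |r * (-lam * u^(-lam-1))| *
      (((1 + r*(u^(-lam)-1)) -
        (1 - Fpar lam r (1 + r*(u^(-lam)-1))) / fpar lam r (1 + r*(u^(-lam)-1))) * n *
        Fpar lam r (1 + r*(u^(-lam)-1)) ^ (n-1) * fpar lam r (1 + r*(u^(-lam)-1)))
    = ((1-r)*n) * (1-u)^(n-1) + (r*(1-lam)*n) * (u^(-lam)*(1-u)^(n-1)) := by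
  rw [Fpar_comp hl0 hr0 hu0, fpar_comp hl0 hr0 hu0]
  have hE : (0:ℝ) < u^(-lam-1) := Real.rpow_pos_of_pos hu0 _
  have hD : (0:ℝ) < u^(1+lam) := Real.rpow_pos_of_pos hu0 _
  have hED : u^(-lam-1) * u^(1+lam) = 1 := by
    rw [← Real.rpow_add hu0, show -lam-1+(1+lam) = 0 by ring, Real.rpow_zero]
  have hAD : u^(-lam) * u^(1+lam) = u := by
    rw [← Real.rpow_add hu0, show -lam+(1+lam) = 1 by ring, Real.rpow_one]
  have habs : |r * (-lam * u^(-lam-1))| = r * lam * u^(-lam-1) := by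
    rw [show r * (-lam * u^(-lam-1)) = -(r * lam * u^(-lam-1)) by ring, abs_neg,
      abs_of_pos (by positivity)]
  rw [habs]
  have h1u : 1 - (1 - u) = u := by ring
  rw [h1u]
  have hdiv : u / ((1/(lam*r)) * u^(1+lam)) = lam * r * u^(-lam) := by
    rw [div_eq_iff (by positivity)]
    field_simp
    linear_combination (-1:ℝ)*hAD
  rw [hdiv]
  field_simp
  linear_combination ((n:ℝ) * (1-u)^(n-1) * (1 - r + r*u^(-lam) - r*u^(-lam)*lam)) * hED

lemma myer_eq {lam r : ℝ} (hl0 : 0 < lam) (hl1 : lam < 1) (hr0 : 0 < r)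
    (n : ℕ) (hn : 2 ≤ n) :
    Myer (Fpar lam r) (fpar lam r) 1 n = 1 + r * (betaCoef n lam - 1) := by
  have hn1 : 1 ≤ n := by omega
  have hderiv : ∀ u ∈ Set.Ioo (0:ℝ) 1,
      HasDerivWithinAt (fun u => 1 + r*(u^(-lam)-1)) (r * (-lam * u^(-lam-1)))
        (Set.Ioo (0:ℝ) 1) u := by
    intro u hu
    have h := Real.hasDerivAt_rpow_const (x := u) (p := -lam) (Or.inl hu.1.ne')
    exact (((h.sub_const 1).const_mul r).const_add 1).hasDerivWithinAt
  have hinj : Set.InjOn (fun u => 1 + r*(u^(-lam)-1)) (Set.Ioo (0:ℝ) 1) := by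
    have : StrictAntiOn (fun u : ℝ => 1 + r*(u^(-lam)-1)) (Set.Ioo (0:ℝ) 1) := by
      intro a ha b hb hab
      have := Real.rpow_lt_rpow_of_neg ha.1 hab (neg_lt_zero.mpr hl0)
      simp only
      nlinarith
    exact this.injOn
  have himg := img_eq hl0 hl1 hr0
  rw [Myer, ← himg,
    integral_image_eq_integral_abs_deriv_smul measurableSet_Ioo hderiv hinj]
  rw [MeasureTheory.setIntegral_congr_fun measurableSet_Ioo
    (g := fun u => ((1-r)*n) * (1-u)^(n-1) + (r*(1-lam)*n) * (u^(-lam)*(1-u)^(n-1)))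
    (by
      intro u hu
      simp only [smul_eq_mul]
      exact integrand_comp hl0 hr0 n hu.1)]
  rw [← MeasureTheory.integral_Ioc_eq_integral_Ioo,
    ← intervalIntegral.integral_of_le zero_le_one]
  have hi1 : IntervalIntegrable (fun u : ℝ => ((1-r)*n) * (1-u)^(n-1)) volume 0 1 :=
    (continuous_const.mul ((continuous_const.sub continuous_id).pow (n-1))).intervalIntegrable 0 1
  have hi2 : IntervalIntegrable (fun u : ℝ => u^(-lam)*(1-u)^(n-1)) volume 0 1 :=
    (intervalIntegral.intervalIntegrable_rpow' (by linarith)).mul_continuousOn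
      (((continuous_const.sub continuous_id).pow (n-1)).continuousOn)
  rw [intervalIntegral.integral_add hi1 (hi2.const_mul _),
    intervalIntegral.integral_const_mul, intervalIntegral.integral_const_mul]
  have hpow : ∫ u in (0:ℝ)..1, (1-u)^(n-1) = 1/n := by
    have := intervalIntegral.integral_comp_sub_left (a := (0:ℝ)) (b := 1)
      (fun u => u^(n-1)) 1
    simp only [sub_zero, sub_self] at this
    rw [this, integral_pow]
    have hne : ((n:ℝ)) ≠ 0 := by positivity
    rw [one_pow, zero_pow (by omega)]
    have : ((n-1 : ℕ) : ℝ) + 1 = (n : ℝ) := by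
      push_cast [Nat.cast_sub hn1]; ring
    rw [this]
    norm_num
  rw [hpow, beta_int hl0 hl1 n hn1, betaCoef]
  have hfac : (n.factorial : ℝ) = n * ((n-1).factorial : ℝ) := by
    have h : n - 1 + 1 = n := by omega
    calc (n.factorial : ℝ) = (((n-1)+1).factorial : ℝ) := by rw [h]
    _ = (((n-1)+1) : ℕ) * ((n-1).factorial : ℝ) := by
        rw [Nat.factorial_succ]; push_cast; ring
    _ = n * ((n-1).factorial : ℝ) := by rw [h]
  have hG2 : Real.Gamma (2 - lam) = (1-lam) * Real.Gamma (1-lam) := by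
    rw [show (2:ℝ)-lam = (1-lam)+1 by ring, Real.Gamma_add_one (by linarith)]
  have hGpos : 0 < Real.Gamma ((n:ℝ)+1-lam) := by
    apply Real.Gamma_pos_of_pos
    have : (1:ℝ) ≤ (n:ℝ) := by exact_mod_cast hn1
    linarith
  have hne : ((n:ℝ)) ≠ 0 := by positivity
  rw [hfac, hG2]
  field_simp
  ring

lemma hnl_img {lam r : ℝ} (hl0 : 0 < lam) (hl1 : lam < 1) (hr0 : 0 < r) (n : ℕ) :
    (fun p => p * (1 - Fpar lam r p ^ n)) '' Set.Ici 1 = Hnl n lam r '' Set.Ioc (0:ℝ) 1 := by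
  ext y
  constructor
  · rintro ⟨p, hp, rfl⟩
    simp only [Set.mem_Ici] at hp
    have hb0 : (0:ℝ) < 1 + (p-1)/r := by
      have : 0 ≤ (p-1)/r := div_nonneg (by linarith) hr0.le
      linarith
    refine ⟨(1 + (p-1)/r) ^ (-(1:ℝ)/lam), ⟨Real.rpow_pos_of_pos hb0 _,
      Real.rpow_le_one_of_one_le_of_nonpos (by
        have : 0 ≤ (p-1)/r := div_nonneg (by linarith) hr0.le
        linarith) (by
        rw [neg_div, Left.neg_nonpos_iff]; positivity)⟩, ?_⟩
    rw [Hnl, inv_comp hl0 hb0]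
    have hp' : 1 + r * (1 + (p-1)/r - 1) = p := by field_simp; ring
    rw [hp']
    simp only [Fpar]
  · rintro ⟨q, ⟨hq0, hq1⟩, rfl⟩
    have hA : 1 ≤ q ^ (-lam) := by
      have := Real.rpow_le_rpow_of_nonpos hq0 hq1 (neg_nonpos.mpr hl0.le)
      rwa [Real.one_rpow] at this
    refine ⟨1 + r*(q^(-lam)-1), by simp only [Set.mem_Ici]; nlinarith, ?_⟩
    simp only
    rw [Fpar_comp hl0 hr0 hq0, Hnl]

lemma hnl_le {lam r : ℝ} (hl0 : 0 < lam) (hl1 : lam < 1) (hr0 : 0 < r) (hr1 : r ≤ 1)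
    (n : ℕ) {q : ℝ} (hq0 : 0 < q) (hq1 : q ≤ 1) : Hnl n lam r q ≤ n := by
  have hA : 1 ≤ q ^ (-lam) := by
    have := Real.rpow_le_rpow_of_nonpos hq0 hq1 (neg_nonpos.mpr hl0.le)
    rwa [Real.one_rpow] at this
  have hbern : 1 - (1-q)^n ≤ n * q := by
    have h := one_add_mul_le_pow (show (-2:ℝ) ≤ -q by linarith) n
    have : (1 + -q) = 1 - q := by ring
    rw [this] at h
    nlinarith
  have hf2 : 0 ≤ 1 - (1-q)^n := by
    have : (1-q)^n ≤ 1 := pow_le_one₀ (by linarith) (by linarith)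
    linarith
  have hf1 : 1 + r * (q^(-lam) - 1) ≤ q^(-lam) := by nlinarith
  have step1 : Hnl n lam r q ≤ q^(-lam) * (n * q) := by
    rw [Hnl]
    apply mul_le_mul hf1 hbern hf2 (by linarith)
  have hAq : q^(-lam) * q ≤ 1 := by
    have e : q^(-lam) * q = q^(-lam+1) := by
      rw [Real.rpow_add_one hq0.ne']
    rw [e]
    exact Real.rpow_le_one hq0.le hq1 (by linarith)
  calc Hnl n lam r q ≤ q^(-lam) * (n * q) := step1
  _ = n * (q^(-lam) * q) := by ring
  _ ≤ n * 1 := by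
      apply mul_le_mul_of_nonneg_left hAq (by positivity)
  _ = n := by ring

theorem rescaled_pareto_lower_bound (lam r : ℝ) (hlam : lam ∈ Set.Ioo (0 : ℝ) 1)
    (hr : r ∈ Set.Ioc (0 : ℝ) 1) (n : ℕ) (hn : 2 ≤ n) (rstar : ℝ)
    (hrstar : rstar ∈ Set.Ici (1 : ℝ))
    (hmax : IsMaxOn (fun x => x * (1 - Fpar lam r x)) (Set.Ici 1) rstar) :
    1 + r * (betaCoef n lam - 1) ≤ Myer (Fpar lam r) (fpar lam r) rstar n ∧
    (1 + r * (betaCoef n lam - 1)) / sSup (Hnl n lam r '' Set.Ioc (0 : ℝ) 1) ≤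
      Myer (Fpar lam r) (fpar lam r) rstar n /
        sSup ((fun p => p * (1 - Fpar lam r p ^ n)) '' Set.Ici 1) := by
  obtain ⟨hl0, hl1⟩ := hlam
  obtain ⟨hr0, hr1⟩ := hr
  -- rstar = 1
  have hrs1 : rstar = 1 := by
    rcases eq_or_lt_of_le (Set.mem_Ici.mp hrstar) with h | h
    · exact h.symm
    · exfalso
      have h1 := hmax (Set.self_mem_Ici)
      have hF1 : Fpar lam r 1 = 0 := by
        simp [Fpar]
      have h1' : 1 * (1 - Fpar lam r 1) ≤ rstar * (1 - Fpar lam r rstar) := h1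
      rw [hF1] at h1'
      have hval : rstar * (1 - Fpar lam r rstar) < 1 := by
        have hx0 : (0:ℝ) < rstar := by linarith
        have hb : rstar ≤ 1 + (rstar-1)/r := by
          have h2 : rstar - 1 ≤ (rstar-1)/r := by
            rw [le_div_iff₀ hr0]
            nlinarith
          linarith
        have hmono : (1 + (rstar-1)/r) ^ (-(1:ℝ)/lam) ≤ rstar ^ (-(1:ℝ)/lam) :=
          Real.rpow_le_rpow_of_nonpos hx0 hb (by
            rw [neg_div, Left.neg_nonpos_iff]; positivity)
        have hexp : -(1:ℝ)/lam + 1 < 0 := by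
          have : 1 < 1/lam := by
            rw [lt_div_iff₀ hl0]; linarith
          rw [neg_div]
          linarith
        have hlt : rstar ^ (-(1:ℝ)/lam + 1) < 1 :=
          Real.rpow_lt_one_of_one_lt_of_neg h hexp
        have heq : rstar * rstar ^ (-(1:ℝ)/lam) = rstar ^ (-(1:ℝ)/lam + 1) := by
          rw [Real.rpow_add_one hx0.ne']
          ring
        calc rstar * (1 - Fpar lam r rstar)
            = rstar * (1 + (rstar-1)/r) ^ (-(1:ℝ)/lam) := by rw [Fpar]; ring_nf
          _ ≤ rstar * rstar ^ (-(1:ℝ)/lam) :=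
              mul_le_mul_of_nonneg_left hmono hx0.le
          _ = rstar ^ (-(1:ℝ)/lam + 1) := heq
          _ < 1 := hlt
      nlinarith
  rw [hrs1]
  have hM : Myer (Fpar lam r) (fpar lam r) 1 n = 1 + r * (betaCoef n lam - 1) :=
    myer_eq hl0 hl1 hr0 n hn
  refine ⟨hM.ge, ?_⟩
  rw [hnl_img hl0 hl1 hr0 n]
  have hbdd : BddAbove (Hnl n lam r '' Set.Ioc (0:ℝ) 1) := by
    refine ⟨n, ?_⟩
    rintro y ⟨q, ⟨hq0, hq1⟩, rfl⟩
    exact hnl_le hl0 hl1 hr0 hr1 n hq0 hq1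
  have h1mem : (1:ℝ) ∈ Hnl n lam r '' Set.Ioc (0:ℝ) 1 := by
    refine ⟨1, ⟨zero_lt_one, le_refl 1⟩, ?_⟩
    rw [Hnl, Real.one_rpow]
    norm_num [zero_pow (show n ≠ 0 by omega)]
  have hS : (1:ℝ) ≤ sSup (Hnl n lam r '' Set.Ioc (0:ℝ) 1) := le_csSup hbdd h1mem
  have hSpos : 0 < sSup (Hnl n lam r '' Set.Ioc (0:ℝ) 1) := by linarith
  exact (div_le_div_iff_of_pos_right hSpos).mpr hM.ge
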